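/- Let (λ_n)_{n≥1} ⊆ [0,1] and nonnegative real sequences (a_n), (b_n) satisfy a_{n+1} ≤ (1-λ_{n+1})·a_n + b_n for all n ≥ 1. If ∑ λ_n diverges and ∑ b_n converges, then lim_{n→∞} a_n = 0. -/

import Mathlib

open Finset Filter

lemma liu_key (lam a b : ℕ → ℝ)
    (hlam : ∀ n ≥ 1, lam n ∈ Set.Icc (0:ℝ) 1)
    (hb : ∀ n ≥ 1, 0 ≤ b n)
    (hrec : ∀ n ≥ 1, a (n + 1) ≤ (1 - lam (n + 1)) * a n + b n)
    (N : ℕ) (hN : 1 ≤ N) :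
    ∀ m, N ≤ m → a m ≤ (∏ k ∈ Finset.Icc (N+1) m, (1 - lam k)) * a N
        + ∑ j ∈ Finset.Ico N m, b j := by
  refine Nat.le_induction ?_ ?_
  · simp
  · intro m hm ih
    have hl := hlam (m+1) (by omega)
    simp only [Set.mem_Icc] at hl
    have h1 : 0 ≤ 1 - lam (m+1) := by linarith [hl.2]
    have h2 : 1 - lam (m+1) ≤ 1 := by linarith [hl.1]
    have hS : 0 ≤ ∑ j ∈ Finset.Ico N m, b j :=
      Finset.sum_nonneg fun j hj => hb j (by simp at hj; omega)
    have hstep := hrec m (by omega)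
    have hmul : (1 - lam (m+1)) * a m ≤
        (1 - lam (m+1)) * ((∏ k ∈ Finset.Icc (N+1) m, (1 - lam k)) * a N
          + ∑ j ∈ Finset.Ico N m, b j) := mul_le_mul_of_nonneg_left ih h1
    have hprod : ∏ k ∈ Finset.Icc (N+1) (m+1), (1 - lam k)
        = (∏ k ∈ Finset.Icc (N+1) m, (1 - lam k)) * (1 - lam (m+1)) :=
      Finset.prod_Icc_succ_top (by omega) _
    have hsum' : ∑ j ∈ Finset.Ico N (m+1), b j
        = (∑ j ∈ Finset.Ico N m, b j) + b m :=
      Finset.sum_Ico_succ_top hm _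
    rw [hprod, hsum']
    have hmn : 0 ≤ lam (m+1) * ∑ j ∈ Finset.Ico N m, b j := mul_nonneg hl.1 hS
    nlinarith

theorem liu_lemma_qualitative
    (lam a b : ℕ → ℝ)
    (hlam : ∀ n ≥ 1, lam n ∈ Set.Icc (0:ℝ) 1)
    (ha : ∀ n ≥ 1, 0 ≤ a n) (hb : ∀ n ≥ 1, 0 ≤ b n)
    (hrec : ∀ n ≥ 1, a (n + 1) ≤ (1 - lam (n + 1)) * a n + b n)
    (hdiv : Filter.Tendsto (fun m => ∑ i ∈ Finset.Icc 1 m, lam i) Filter.atTop Filter.atTop)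
    (hsum : Summable (fun j : ℕ => b (j + 1))) :
    Filter.Tendsto a Filter.atTop (nhds 0) := by
  rw [Metric.tendsto_atTop]
  intro ε hε
  have htail : Tendsto (fun i => ∑' k, b (k + i + 1)) atTop (nhds 0) := by
    simpa using (tendsto_sum_nat_add (fun j => b (j + 1)))
  obtain ⟨i, hi⟩ := (htail.eventually (gt_mem_nhds (half_pos hε))).exists
  set N := i + 1 with hNdef
  have hN1 : 1 ≤ N := by omega
  have hsumN : Summable (fun k => b (k + i + 1)) := by
    simpa using (summable_nat_add_iff i).2 hsum
  -- tail sums bound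
  have htb : ∀ m, ∑ j ∈ Finset.Ico N m, b j < ε / 2 := by
    intro m
    have h1 : ∑ j ∈ Finset.Ico N m, b j = ∑ j ∈ Finset.range (m - N), b (N + j) :=
      Finset.sum_Ico_eq_sum_range b N m
    have h2 : ∑ j ∈ Finset.range (m - N), b (N + j) ≤ ∑' k, b (k + i + 1) := by
      have := Summable.sum_le_tsum (f := fun k => b (k + i + 1)) (Finset.range (m - N))
        (fun k _ => hb _ (by omega)) hsumN
      convert this using 2 with j
      congr 1
      exact congrArg b (by omega)
    calc ∑ j ∈ Finset.Ico N m, b j ≤ ∑' k, b (k + i + 1) := by rw [h1]; exact h2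
      _ < ε / 2 := hi
  -- product nonneg and bounded by exp
  have hprodnn : ∀ m, 0 ≤ ∏ k ∈ Finset.Icc (N+1) m, (1 - lam k) := by
    intro m
    refine Finset.prod_nonneg fun k hk => ?_
    have := hlam k (by simp at hk; omega)
    simp only [Set.mem_Icc] at this; linarith [this.2]
  have hprodle : ∀ m, ∏ k ∈ Finset.Icc (N+1) m, (1 - lam k)
      ≤ Real.exp (-(∑ k ∈ Finset.Icc (N+1) m, lam k)) := by
    intro m
    calc ∏ k ∈ Finset.Icc (N+1) m, (1 - lam k)
        ≤ ∏ k ∈ Finset.Icc (N+1) m, Real.exp (-(lam k)) := by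
          refine Finset.prod_le_prod (fun k hk => ?_) (fun k hk => ?_)
          · have := hlam k (by simp at hk; omega)
            simp only [Set.mem_Icc] at this; linarith [this.2]
          · linarith [Real.add_one_le_exp (-(lam k))]
      _ = Real.exp (∑ k ∈ Finset.Icc (N+1) m, (-(lam k))) := (Real.exp_sum _ _).symm
      _ = Real.exp (-(∑ k ∈ Finset.Icc (N+1) m, lam k)) := by rw [Finset.sum_neg_distrib]
  -- divergence of partial sums over Icc (N+1) m
  have hSdiv : Tendsto (fun m => ∑ k ∈ Finset.Icc (N+1) m, lam k) atTop atTop := by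
    have heq : ∀ᶠ m in atTop, ∑ k ∈ Finset.Icc (N+1) m, lam k
        = (∑ j ∈ Finset.Icc 1 m, lam j) + (-(∑ j ∈ Finset.Icc 1 N, lam j)) := by
      filter_upwards [eventually_ge_atTop N] with m hm
      have e1 : Finset.Icc 1 N = Finset.Ioc 0 N := Finset.Icc_add_one_left_eq_Ioc 0 N
      have e2 : Finset.Icc 1 m = Finset.Ioc 0 m := Finset.Icc_add_one_left_eq_Ioc 0 m
      have e3 : Finset.Icc (N+1) m = Finset.Ioc N m := Finset.Icc_add_one_left_eq_Ioc N m
      have key : ∑ j ∈ Finset.Ioc 0 N, lam j + ∑ k ∈ Finset.Ioc N m, lam k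
          = ∑ j ∈ Finset.Ioc 0 m, lam j :=
        Finset.sum_Ioc_consecutive _ (Nat.zero_le N) hm
      rw [e1, e2, e3]; linarith
    exact (tendsto_atTop_add_const_right atTop _ hdiv).congr' (heq.mono fun m h => h.symm)
  -- product * a N tends to 0
  have hexp0 : Tendsto (fun m => Real.exp (-(∑ k ∈ Finset.Icc (N+1) m, lam k)))
      atTop (nhds 0) := Real.tendsto_exp_atBot.comp (tendsto_neg_atBot_iff.mpr hSdiv)
  have hP0 : Tendsto (fun m => ∏ k ∈ Finset.Icc (N+1) m, (1 - lam k)) atTop (nhds 0) :=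
    squeeze_zero hprodnn hprodle hexp0
  have hPa : Tendsto (fun m => (∏ k ∈ Finset.Icc (N+1) m, (1 - lam k)) * a N)
      atTop (nhds 0) := by simpa using hP0.mul_const (a N)
  obtain ⟨M, hM⟩ := (hPa.eventually (gt_mem_nhds (half_pos hε))).exists_forall_of_atTop
  refine ⟨max M N, fun n hn => ?_⟩
  have hnN : N ≤ n := le_trans (le_max_right _ _) hn
  have hkey := liu_key lam a b hlam hb hrec N hN1 n hnN
  have han : 0 ≤ a n := ha n (by omega)
  rw [Real.dist_eq, sub_zero, abs_of_nonneg han]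
  have h1 := hM n (le_trans (le_max_left _ _) hn)
  have h2 := htb n
  linarith
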